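/- Let A and B be 2×2 Hermitian matrices with eigenvalues α₁ ≥ α₂ and β₁ ≥ β₂ respectively. Then the eigenvalues γ₁ ≥ γ₂ of C = A + B satisfy γ₁ + γ₂ = α₁ + α₂ + β₁ + β₂ and |（α₁−α₂）−（β₁−β₂）| ≤ γ₁ − γ₂ ≤ (α₁−α₂) + (β₁−β₂). -/

import Mathlib

open Matrix

section Aux

variable {n : Type*} [Fintype n] [DecidableEq n] {M : Matrix n n ℂ}

lemma trace_eq_sum_eigs (hM : M.IsHermitian) :
    M.trace = ((∑ i, hM.eigenvalues i : ℝ) : ℂ) := by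
  conv_lhs => rw [hM.spectral_theorem, Unitary.conjStarAlgAut_apply]
  rw [Matrix.trace_mul_cycle,
    Unitary.star_mul_self_of_mem hM.eigenvectorUnitary.2, one_mul, trace_diagonal]
  push_cast
  rfl

lemma rayleigh_bounds (hM : M.IsHermitian) (v : n → ℂ) (hv : star v ⬝ᵥ v = 1)
    {lo hi : ℝ} (hlo : ∀ i, lo ≤ hM.eigenvalues i) (hhi : ∀ i, hM.eigenvalues i ≤ hi) :
    lo ≤ (star v ⬝ᵥ (M *ᵥ v)).re ∧ (star v ⬝ᵥ (M *ᵥ v)).re ≤ hi := by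
  set U : Matrix n n ℂ := (hM.eigenvectorUnitary : Matrix n n ℂ) with hU
  set w : n → ℂ := star U *ᵥ v with hw
  have hsw : star w = star v ᵥ* U := by
    rw [hw, star_mulVec, star_eq_conjTranspose, conjTranspose_conjTranspose]
  have hnorm : ∑ i, Complex.normSq (w i) = 1 := by
    have h1 : star w ⬝ᵥ w = (1 : ℂ) := by
      rw [hsw, hw, dotProduct_mulVec, vecMul_vecMul, hU,
        Unitary.mul_star_self_of_mem hM.eigenvectorUnitary.2, vecMul_one, hv]
    have h2 : star w ⬝ᵥ w = ((∑ i, Complex.normSq (w i) : ℝ) : ℂ) := by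
      simp only [dotProduct, Pi.star_apply]
      push_cast
      exact Finset.sum_congr rfl fun i _ => by
        rw [Complex.star_def, ← Complex.normSq_eq_conj_mul_self]
    rw [h1] at h2
    exact_mod_cast h2.symm
  have key : (star v ⬝ᵥ (M *ᵥ v)).re = ∑ i, hM.eigenvalues i * Complex.normSq (w i) := by
    have hM' : M *ᵥ v = U *ᵥ ((diagonal (RCLike.ofReal ∘ hM.eigenvalues)) *ᵥ w) := by
      conv_lhs => rw [hM.spectral_theorem, Unitary.conjStarAlgAut_apply]
      rw [hw, mulVec_mulVec, mulVec_mulVec, hU]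
    rw [hM', dotProduct_mulVec, ← hsw]
    have h3 : star w ⬝ᵥ ((diagonal (RCLike.ofReal ∘ hM.eigenvalues)) *ᵥ w)
        = ((∑ i, hM.eigenvalues i * Complex.normSq (w i) : ℝ) : ℂ) := by
      simp only [dotProduct, mulVec_diagonal, Pi.star_apply, Function.comp_apply]
      push_cast
      exact Finset.sum_congr rfl fun i _ => by
        rw [Complex.star_def, mul_left_comm, ← Complex.normSq_eq_conj_mul_self]
        norm_num
    rw [h3, Complex.ofReal_re]
  constructor
  · rw [key]
    calc lo = lo * ∑ i, Complex.normSq (w i) := by rw [hnorm, mul_one]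
    _ = ∑ i, lo * Complex.normSq (w i) := by rw [Finset.mul_sum]
    _ ≤ _ := Finset.sum_le_sum fun i _ =>
        mul_le_mul_of_nonneg_right (hlo i) (Complex.normSq_nonneg _)
  · rw [key]
    calc ∑ i, hM.eigenvalues i * Complex.normSq (w i)
        ≤ ∑ i, hi * Complex.normSq (w i) := Finset.sum_le_sum fun i _ =>
          mul_le_mul_of_nonneg_right (hhi i) (Complex.normSq_nonneg _)
    _ = hi := by rw [← Finset.mul_sum, hnorm, mul_one]

lemma eigvec_unit (hM : M.IsHermitian) (j : n) :
    star ⇑(hM.eigenvectorBasis j) ⬝ᵥ ⇑(hM.eigenvectorBasis j) = 1 := by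
  have h := orthonormal_iff_ite.mp hM.eigenvectorBasis.orthonormal j j
  simp only [if_pos rfl] at h
  rw [EuclideanSpace.inner_eq_star_dotProduct, dotProduct_comm] at h
  simpa using h

lemma eigvec_rayleigh (hM : M.IsHermitian) (j : n) :
    (star ⇑(hM.eigenvectorBasis j) ⬝ᵥ (M *ᵥ ⇑(hM.eigenvectorBasis j))).re
      = hM.eigenvalues j := by
  rw [hM.mulVec_eigenvectorBasis]
  rw [dotProduct_smul, eigvec_unit hM j]
  simp

end Aux

/-- `A` (Hermitian, with diagonalization witness `hA`) has eigenvalues given by the tuple `a`,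
up to a permutation. -/
def eigsEq {n : ℕ} {A : Matrix (Fin n) (Fin n) ℂ} (hA : A.IsHermitian) (a : Fin n → ℝ) : Prop :=
  ∃ σ : Equiv.Perm (Fin n), ∀ i, hA.eigenvalues (σ i) = a i

lemma eigsEq_two_range {A : Matrix (Fin 2) (Fin 2) ℂ} {hA : A.IsHermitian} {μ₁ μ₂ : ℝ}
    (h : eigsEq hA ![μ₁, μ₂]) (i : Fin 2) :
    hA.eigenvalues i = μ₁ ∨ hA.eigenvalues i = μ₂ := by
  obtain ⟨σ, hσ⟩ := h
  have h1 := hσ (σ.symm i)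
  rw [Equiv.apply_symm_apply] at h1
  rw [h1]
  generalize σ.symm i = j
  fin_cases j <;> simp

lemma eigsEq_two_sum {A : Matrix (Fin 2) (Fin 2) ℂ} {hA : A.IsHermitian} {μ₁ μ₂ : ℝ}
    (h : eigsEq hA ![μ₁, μ₂]) : ∑ i, hA.eigenvalues i = μ₁ + μ₂ := by
  obtain ⟨σ, hσ⟩ := h
  rw [← Equiv.sum_comp σ hA.eigenvalues, Fintype.sum_congr _ _ hσ, Fin.sum_univ_two]
  simp

/-- Horn's problem for `n = 2`: necessity of the trace identity and triangle inequalities. -/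
theorem horn_n2_necessity (α₁ α₂ β₁ β₂ γ₁ γ₂ : ℝ)
    (hα : α₂ ≤ α₁) (hβ : β₂ ≤ β₁) (hγ : γ₂ ≤ γ₁)
    (A B : Matrix (Fin 2) (Fin 2) ℂ) (hA : A.IsHermitian) (hB : B.IsHermitian)
    (hAe : eigsEq hA ![α₁, α₂]) (hBe : eigsEq hB ![β₁, β₂])
    (hCe : eigsEq (hA.add hB) ![γ₁, γ₂]) :
    γ₁ + γ₂ = α₁ + α₂ + β₁ + β₂ ∧
    |(α₁ - α₂) - (β₁ - β₂)| ≤ γ₁ - γ₂ ∧ γ₁ - γ₂ ≤ (α₁ - α₂) + (β₁ - β₂) := by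
  have hC : (A + B).IsHermitian := hA.add hB
  -- eigenvalue bounds
  have hAlo : ∀ i, α₂ ≤ hA.eigenvalues i := fun i => by
    rcases eigsEq_two_range hAe i with h | h <;> rw [h] <;> linarith
  have hAhi : ∀ i, hA.eigenvalues i ≤ α₁ := fun i => by
    rcases eigsEq_two_range hAe i with h | h <;> rw [h] <;> linarith
  have hBlo : ∀ i, β₂ ≤ hB.eigenvalues i := fun i => by
    rcases eigsEq_two_range hBe i with h | h <;> rw [h] <;> linarith
  have hBhi : ∀ i, hB.eigenvalues i ≤ β₁ := fun i => by
    rcases eigsEq_two_range hBe i with h | h <;> rw [h] <;> linarith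
  have hClo : ∀ i, γ₂ ≤ (hA.add hB).eigenvalues i := fun i => by
    rcases eigsEq_two_range hCe i with h | h <;> rw [h] <;> linarith
  have hChi : ∀ i, (hA.add hB).eigenvalues i ≤ γ₁ := fun i => by
    rcases eigsEq_two_range hCe i with h | h <;> rw [h] <;> linarith
  -- trace identity
  have htr : γ₁ + γ₂ = α₁ + α₂ + β₁ + β₂ := by
    have h1 : (A + B).trace = A.trace + B.trace := trace_add A B
    rw [trace_eq_sum_eigs hA, trace_eq_sum_eigs hB, trace_eq_sum_eigs (hA.add hB),
      eigsEq_two_sum hAe, eigsEq_two_sum hBe, eigsEq_two_sum hCe] at h1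
    have h2 : ((γ₁ + γ₂ : ℝ) : ℂ) = ((α₁ + α₂ + β₁ + β₂ : ℝ) : ℂ) := by
      push_cast at h1 ⊢; linear_combination h1
    exact Complex.ofReal_injective h2
  -- rayleigh quotient splits over A + B
  have hsplit : ∀ v : Fin 2 → ℂ,
      (star v ⬝ᵥ ((A + B) *ᵥ v)).re = (star v ⬝ᵥ (A *ᵥ v)).re + (star v ⬝ᵥ (B *ᵥ v)).re := by
    intro v
    rw [add_mulVec, dotProduct_add, Complex.add_re]
  -- Weyl: γ₁ ≤ α₁ + β₁
  obtain ⟨σC, hσC⟩ := hCe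
  have w1 : γ₁ ≤ α₁ + β₁ := by
    set v := ⇑((hA.add hB).eigenvectorBasis (σC 0)) with hv
    have hunit : star v ⬝ᵥ v = 1 := eigvec_unit (hA.add hB) (σC 0)
    have hval : (star v ⬝ᵥ ((A + B) *ᵥ v)).re = γ₁ := by
      have := eigvec_rayleigh (hA.add hB) (σC 0)
      rw [hσC 0] at this
      simpa using this
    have hA1 := (rayleigh_bounds hA v hunit hAlo hAhi).2
    have hB1 := (rayleigh_bounds hB v hunit hBlo hBhi).2
    have := hsplit v
    linarith [hval, hA1, hB1, this]
  obtain ⟨σA, hσA⟩ := hAe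
  have w2 : α₁ + β₂ ≤ γ₁ := by
    set v := ⇑(hA.eigenvectorBasis (σA 0)) with hv
    have hunit : star v ⬝ᵥ v = 1 := eigvec_unit hA (σA 0)
    have hval : (star v ⬝ᵥ (A *ᵥ v)).re = α₁ := by
      have := eigvec_rayleigh hA (σA 0)
      rw [hσA 0] at this
      simpa using this
    have hB1 := (rayleigh_bounds hB v hunit hBlo hBhi).1
    have hC1 := (rayleigh_bounds hC v hunit hClo hChi).2
    have := hsplit v
    linarith [hval, hB1, hC1, this]
  obtain ⟨σB, hσB⟩ := hBe
  have w3 : α₂ + β₁ ≤ γ₁ := by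
    set v := ⇑(hB.eigenvectorBasis (σB 0)) with hv
    have hunit : star v ⬝ᵥ v = 1 := eigvec_unit hB (σB 0)
    have hval : (star v ⬝ᵥ (B *ᵥ v)).re = β₁ := by
      have := eigvec_rayleigh hB (σB 0)
      rw [hσB 0] at this
      simpa using this
    have hA1 := (rayleigh_bounds hA v hunit hAlo hAhi).1
    have hC1 := (rayleigh_bounds hC v hunit hClo hChi).2
    have := hsplit v
    linarith [hval, hA1, hC1, this]
  refine ⟨htr, ?_, by linarith⟩
  rw [abs_le]
  constructor <;> linarith
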